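/- arXiv:2203.10148 — 3 statements merged into one kernel-verified Lean document; each statement's English description precedes it below -/
import Mathlib

section
/- The parareal recursion λ_{n+1}^{k+1} = G(λ_n^{k+1}) + F(λ_n^k) - G(λ_n^k), with λ_0^{k+1} = λ_0, is algebraically equivalent to the preconditioned Richardson iteration Λ^{k+1} = Λ^k + 𝓖^{-1}(B - 𝓕·Λ^k), where 𝓖 is the block bidiagonal matrix with identity on the diagonal and -G on the subdiagonal. -/
/-- Block bidiagonal matrix: identity on the diagonal, `-F` on the subdiagonal. -/
def blockBidiag {K V : Type*} [Field K] [AddCommGroup V] [Module K V]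
    (F : Module.End K V) (N : ℕ) : Matrix (Fin N) (Fin N) (Module.End K V) :=
  fun i j => if i = j then 1 else if (i : ℕ) = (j : ℕ) + 1 then -F else 0

/-- Inverse of the block bidiagonal matrix: `(i,j)` block is `G^(i-j)` for `i ≥ j`. -/
def blockInv {K V : Type*} [Field K] [AddCommGroup V] [Module K V]
    (G : Module.End K V) (N : ℕ) : Matrix (Fin N) (Fin N) (Module.End K V) :=
  fun i j => if (j : ℕ) ≤ (i : ℕ) then G ^ ((i : ℕ) - (j : ℕ)) else 0

/-- Action of a block matrix of endomorphisms on a vector in `V^N`. -/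
def act {K V : Type*} [Field K] [AddCommGroup V] [Module K V] {N : ℕ}
    (M : Matrix (Fin N) (Fin N) (Module.End K V)) (x : Fin N → V) : Fin N → V :=
  fun i => ∑ j, M i j (x j)

section aux
variable {K V : Type*} [Field K] [AddCommGroup V] [Module K V]

lemma act_bidiag_zero (F : Module.End K V) {N : ℕ} (x : Fin N → V) (i : Fin N)
    (hi : (i : ℕ) = 0) : act (blockBidiag F N) x i = x i := by
  unfold act blockBidiag
  rw [Finset.sum_eq_single i]
  · simp
  · intro j _ hj
    have h1 : i ≠ j := fun h => hj h.symm
    have h2 : (i : ℕ) ≠ (j : ℕ) + 1 := by omega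
    simp [h1, h2]
  · simp

lemma act_bidiag_succ (F : Module.End K V) {N : ℕ} (x : Fin N → V) (n : Fin N)
    (h : (n : ℕ) + 1 < N) :
    act (blockBidiag F N) x ⟨(n : ℕ) + 1, h⟩ = x ⟨(n : ℕ) + 1, h⟩ - F (x n) := by
  unfold act blockBidiag
  have key : ∀ j : Fin N,
      (if (⟨(n : ℕ) + 1, h⟩ : Fin N) = j then (1 : Module.End K V)
        else if ((n : ℕ) + 1 : ℕ) = (j : ℕ) + 1 then -F else 0) (x j) =
      (if j = (⟨(n : ℕ) + 1, h⟩ : Fin N) then x j else 0) +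
      (if j = n then -(F (x j)) else 0) := by
    intro j
    have hne0 : (⟨(n : ℕ) + 1, h⟩ : Fin N) ≠ n := by
      intro hh; have := congrArg Fin.val hh; simp at this
    by_cases h1 : j = (⟨(n : ℕ) + 1, h⟩ : Fin N)
    · have : j ≠ n := by rw [h1]; exact hne0
      simp [h1, this, hne0]
    · by_cases h2 : j = n
      · have hne : (⟨(n : ℕ) + 1, h⟩ : Fin N) ≠ j := fun hh => h1 hh.symm
        have hv : ((n : ℕ) + 1 : ℕ) = (j : ℕ) + 1 := by rw [h2]
        subst h2
        simp [hne, h1, hv, hne0]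
      · have hne : (⟨(n : ℕ) + 1, h⟩ : Fin N) ≠ j := fun hh => h1 hh.symm
        have hv : ((n : ℕ) + 1 : ℕ) ≠ (j : ℕ) + 1 := by
          intro hh
          apply h2
          exact Fin.ext (by omega)
        simp [hne, h1, h2, hv]
        rw [if_neg (fun e => h2 (Fin.ext e.symm)), LinearMap.zero_apply]
  rw [Finset.sum_congr rfl (fun j _ => key j), Finset.sum_add_distrib,
    Finset.sum_ite_eq' Finset.univ, Finset.sum_ite_eq' Finset.univ]
  simp [sub_eq_add_neg]

lemma act_inv_zero (G : Module.End K V) {N : ℕ} (r : Fin N → V) (i : Fin N)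
    (hi : (i : ℕ) = 0) : act (blockInv G N) r i = r i := by
  unfold act blockInv
  rw [Finset.sum_eq_single i]
  · simp
  · intro j _ hj
    have h1 : ¬ ((j : ℕ) ≤ (i : ℕ)) := by
      intro hh
      apply hj
      exact Fin.ext (by omega)
    simp [h1]
  · simp

lemma act_inv_succ (G : Module.End K V) {N : ℕ} (r : Fin N → V) (n : Fin N)
    (h : (n : ℕ) + 1 < N) :
    act (blockInv G N) r ⟨(n : ℕ) + 1, h⟩ =
      G (act (blockInv G N) r n) + r ⟨(n : ℕ) + 1, h⟩ := by
  unfold act blockInv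
  rw [map_sum]
  have key : ∀ j : Fin N,
      (if (j : ℕ) ≤ (n : ℕ) + 1 then G ^ ((n : ℕ) + 1 - (j : ℕ)) else 0) (r j) =
      G ((if (j : ℕ) ≤ (n : ℕ) then G ^ ((n : ℕ) - (j : ℕ)) else 0) (r j)) +
      (if j = (⟨(n : ℕ) + 1, h⟩ : Fin N) then r j else 0) := by
    intro j
    rcases lt_trichotomy (j : ℕ) ((n : ℕ) + 1) with h1 | h1 | h1
    · have h2 : (j : ℕ) ≤ (n : ℕ) := by omega
      have h3 : (j : ℕ) ≤ (n : ℕ) + 1 := by omega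
      have h4 : j ≠ (⟨(n : ℕ) + 1, h⟩ : Fin N) := by
        intro hh; have := congrArg Fin.val hh; simp at this; omega
      have h5 : (n : ℕ) + 1 - (j : ℕ) = ((n : ℕ) - (j : ℕ)) + 1 := by omega
      simp only [h2, h3, h4, if_true, if_false, if_pos, add_zero]
      rw [h5, pow_succ']
      rfl
    · have h2 : ¬ ((j : ℕ) ≤ (n : ℕ)) := by omega
      have h3 : (j : ℕ) ≤ (n : ℕ) + 1 := by omega
      have h4 : j = (⟨(n : ℕ) + 1, h⟩ : Fin N) := Fin.ext (by simpa using h1)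
      have h5 : (n : ℕ) + 1 - (j : ℕ) = 0 := by omega
      simp [h2, h3, h4, h5]
    · have h2 : ¬ ((j : ℕ) ≤ (n : ℕ)) := by omega
      have h3 : ¬ ((j : ℕ) ≤ (n : ℕ) + 1) := by omega
      have h4 : j ≠ (⟨(n : ℕ) + 1, h⟩ : Fin N) := by
        intro hh; have := congrArg Fin.val hh; simp at this; omega
      simp [h2, h3, h4]
  rw [Finset.sum_congr rfl (fun j _ => key j), Finset.sum_add_distrib,
    Finset.sum_ite_eq' Finset.univ]
  simp

lemma rhs_zero (F G : Module.End K V) {N : ℕ} (lam0 : V) (x : Fin N → V) (i : Fin N)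
    (hi : (i : ℕ) = 0) :
    x i + act (blockInv G N)
        ((fun i : Fin N => if (i : ℕ) = 0 then lam0 else 0) -
          act (blockBidiag F N) x) i = lam0 := by
  rw [act_inv_zero G _ i hi, Pi.sub_apply, act_bidiag_zero F x i hi]
  simp [hi]

lemma rhs_succ (F G : Module.End K V) {N : ℕ} (lam0 : V) (x : Fin N → V) (n : Fin N)
    (h : (n : ℕ) + 1 < N) :
    x ⟨(n : ℕ) + 1, h⟩ + act (blockInv G N)
        ((fun i : Fin N => if (i : ℕ) = 0 then lam0 else 0) -
          act (blockBidiag F N) x) ⟨(n : ℕ) + 1, h⟩ =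
    G (x n + act (blockInv G N)
        ((fun i : Fin N => if (i : ℕ) = 0 then lam0 else 0) -
          act (blockBidiag F N) x) n) + F (x n) - G (x n) := by
  rw [act_inv_succ G _ n h, Pi.sub_apply, act_bidiag_succ F x n h, map_add]
  simp
  abel

end aux


/-- The parareal recursion `λ_{n+1}^{k+1} = G(λ_n^{k+1}) + F(λ_n^k) - G(λ_n^k)`,
`λ_0^{k+1} = λ_0`, is equivalent to the preconditioned Richardson iteration
`Λ^{k+1} = Λ^k + 𝓖⁻¹ (B - 𝓕 Λ^k)`. -/
theorem stmt2 {K V : Type*} [Field K] [AddCommGroup V] [Module K V]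
    (F G : Module.End K V) (N : ℕ) (hN : 1 ≤ N) (lam0 : V)
    (Λ : ℕ → Fin N → V)
    (h0 : ∀ n : Fin N, (n : ℕ) = 0 → Λ 0 n = lam0) :
    (∀ k : ℕ, (∀ n : Fin N, (n : ℕ) = 0 → Λ (k + 1) n = lam0) ∧
        ∀ n : Fin N, ∀ h : (n : ℕ) + 1 < N,
          Λ (k + 1) ⟨(n : ℕ) + 1, h⟩ =
            G (Λ (k + 1) n) + F (Λ k n) - G (Λ k n)) ↔
      (∀ k : ℕ, Λ (k + 1) = Λ k +
          act (blockInv G N)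
            ((fun i : Fin N => if (i : ℕ) = 0 then lam0 else 0) -
              act (blockBidiag F N) (Λ k))) := by
  constructor
  · intro H k
    obtain ⟨hz, hstep⟩ := H k
    funext i
    have key : ∀ m : ℕ, ∀ hm : m < N, Λ (k + 1) ⟨m, hm⟩ =
        (Λ k + act (blockInv G N)
          ((fun i : Fin N => if (i : ℕ) = 0 then lam0 else 0) -
            act (blockBidiag F N) (Λ k))) ⟨m, hm⟩ := by
      intro m
      induction m with
      | zero =>
        intro hm
        rw [hz ⟨0, hm⟩ rfl, Pi.add_apply]
        exact (rhs_zero F G lam0 (Λ k) ⟨0, hm⟩ rfl).symm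
      | succ m ih =>
        intro hm
        have hm' : m < N := by omega
        rw [hstep ⟨m, hm'⟩ hm, ih hm', Pi.add_apply, Pi.add_apply]
        exact (rhs_succ F G lam0 (Λ k) ⟨m, hm'⟩ hm).symm
    have := key i.val i.isLt
    simpa using this
  · intro H k
    refine ⟨fun n hn => ?_, fun n h => ?_⟩
    · rw [H k, Pi.add_apply]
      exact rhs_zero F G lam0 (Λ k) n hn
    · rw [H k, Pi.add_apply, Pi.add_apply]
      exact rhs_succ F G lam0 (Λ k) n h
end

section
/- If ‖F - G‖ ≤ ε and ‖G‖ ≤ 1, then the parareal error satisfies ‖e_n^k‖ ≤ ε^k · C(n,k) · max_{0≤m≤N} ‖e_m^0‖, where C(n,k) is the binomial coefficient 'n choose k'. -/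
/-- Binomial convergence bound for parareal: if `‖F - G‖ ≤ ε` and `‖G‖ ≤ 1` then
`‖e_n^k‖ ≤ ε^k (n choose k) max_{0 ≤ m ≤ N} ‖e_m^0‖`. -/
theorem stmt8 {V : Type*} [NormedAddCommGroup V] [NormedSpace ℝ V]
    (F G : V →L[ℝ] V) (ε : ℝ) (hFG : ‖F - G‖ ≤ ε) (hG : ‖G‖ ≤ 1)
    (N : ℕ) (lam : ℕ → V) (lamk : ℕ → ℕ → V)
    (hexact : ∀ n : ℕ, lam (n + 1) = F (lam n))
    (h0 : ∀ k : ℕ, lamk k 0 = lam 0)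
    (hrec : ∀ k n : ℕ, lamk (k + 1) (n + 1) =
      G (lamk (k + 1) n) + F (lamk k n) - G (lamk k n)) :
    ∀ k n : ℕ, n ≤ N →
      ‖lamk k n - lam n‖ ≤ ε ^ k * (n.choose k) *
        (Finset.range (N + 1)).sup'
          (Finset.nonempty_range_iff.mpr (Nat.succ_ne_zero N))
          (fun m => ‖lamk 0 m - lam m‖) := by
  set M := (Finset.range (N + 1)).sup'
      (Finset.nonempty_range_iff.mpr (Nat.succ_ne_zero N))
      (fun m => ‖lamk 0 m - lam m‖) with hM
  have hε : 0 ≤ ε := le_trans (norm_nonneg _) hFG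
  have hMnn : 0 ≤ M := by
    refine le_trans (norm_nonneg (lamk 0 0 - lam 0)) ?_
    exact Finset.le_sup' (f := fun m => ‖lamk 0 m - lam m‖) (Finset.mem_range.mpr (Nat.succ_pos N))
  intro k
  induction k with
  | zero =>
    intro n hn
    simp only [pow_zero, Nat.choose_zero_right, Nat.cast_one, one_mul]
    exact Finset.le_sup' (f := fun m => ‖lamk 0 m - lam m‖) (Finset.mem_range.mpr (Nat.lt_succ_of_le hn))
  | succ k ih =>
    intro n
    induction n with
    | zero =>
      intro _
      simp only [h0, sub_self, norm_zero]
      positivity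
    | succ n ihn =>
      intro hn
      have hnN : n ≤ N := Nat.le_of_succ_le hn
      have key : lamk (k + 1) (n + 1) - lam (n + 1) =
          G (lamk (k + 1) n - lam n) + (F - G) (lamk k n - lam n) := by
        rw [hrec, hexact]
        simp only [ContinuousLinearMap.sub_apply, map_sub]
        abel
      calc ‖lamk (k + 1) (n + 1) - lam (n + 1)‖
          ≤ ‖G (lamk (k + 1) n - lam n)‖ + ‖(F - G) (lamk k n - lam n)‖ := by
            rw [key]; exact norm_add_le _ _
        _ ≤ ‖G‖ * ‖lamk (k + 1) n - lam n‖ + ‖F - G‖ * ‖lamk k n - lam n‖ :=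
            add_le_add (G.le_opNorm _) ((F - G).le_opNorm _)
        _ ≤ 1 * (ε ^ (k + 1) * (n.choose (k + 1)) * M) +
              ε * (ε ^ k * (n.choose k) * M) := by
            refine add_le_add (mul_le_mul hG (ihn hnN) (norm_nonneg _) zero_le_one) ?_
            refine mul_le_mul hFG (ih n hnN) (norm_nonneg _) hε
        _ = ε ^ (k + 1) * ((n.choose (k + 1) : ℝ) + n.choose k) * M := by
            ring
        _ = ε ^ (k + 1) * ((n + 1).choose (k + 1)) * M := by
            rw [Nat.choose_succ_succ, Nat.cast_add]
            ring
end

section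
/- If F is a contraction (‖F‖ ≤ 1), then the operator norm of 𝓕 on H^N (with the product inner product) is at most 2, and the norm of 𝓕^{-1} is at most N. -/
lemma contr_apply {H : Type*} [NormedAddCommGroup H] [InnerProductSpace ℝ H]
    (F : H →L[ℝ] H) (hF : ‖F‖ ≤ 1) (u : H) : ‖F u‖ ≤ ‖u‖ := by
  calc ‖F u‖ ≤ ‖F‖ * ‖u‖ := F.le_opNorm u
  _ ≤ 1 * ‖u‖ := by gcongr
  _ = ‖u‖ := one_mul _

lemma pow_contr_apply {H : Type*} [NormedAddCommGroup H] [InnerProductSpace ℝ H]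
    (F : H →L[ℝ] H) (hF : ‖F‖ ≤ 1) : ∀ (k : ℕ) (u : H), ‖(F ^ k) u‖ ≤ ‖u‖ := by
  intro k
  induction k with
  | zero => intro u; simp
  | succ k ih =>
      intro u
      have : (F ^ (k + 1)) u = F ((F ^ k) u) := by
        rw [pow_succ']; rfl
      rw [this]
      exact (contr_apply F hF _).trans (ih u)

/-- If `‖F‖ ≤ 1` then, in the `ℓ²` product norm on `H^N`, the block bidiagonal
operator `𝓕` has norm at most `2` and its inverse (blocks `F^(i-j)`) has norm at
most `N`. -/
theorem stmt13 {H : Type*} [NormedAddCommGroup H] [InnerProductSpace ℝ H]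
    [CompleteSpace H]
    (N : ℕ) (hN : 1 ≤ N) (F : H →L[ℝ] H) (hF : ‖F‖ ≤ 1) :
    (∀ x : Fin N → H,
        Real.sqrt (∑ n : Fin N,
          ‖x n - if h : 0 < (n : ℕ) then
              F (x ⟨(n : ℕ) - 1, by have := n.isLt; omega⟩) else 0‖ ^ 2) ≤
          2 * Real.sqrt (∑ n : Fin N, ‖x n‖ ^ 2)) ∧
      (∀ x : Fin N → H,
        Real.sqrt (∑ n : Fin N,
          ‖∑ j : Fin N, if (j : ℕ) ≤ (n : ℕ) then
              (F ^ ((n : ℕ) - (j : ℕ))) (x j) else 0‖ ^ 2) ≤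
          (N : ℝ) * Real.sqrt (∑ n : Fin N, ‖x n‖ ^ 2)) := by
  constructor
  · intro x
    set b : Fin N → H := fun n => if h : 0 < (n : ℕ) then
        F (x ⟨(n : ℕ) - 1, by have := n.isLt; omega⟩) else 0 with hb
    -- Minkowski via PiLp
    have tri : Real.sqrt (∑ n : Fin N, ‖x n - b n‖ ^ 2) ≤
        Real.sqrt (∑ n : Fin N, ‖x n‖ ^ 2) + Real.sqrt (∑ n : Fin N, ‖b n‖ ^ 2) := by
      let y : PiLp 2 (fun _ : Fin N => H) := WithLp.toLp 2 x
      let z : PiLp 2 (fun _ : Fin N => H) := WithLp.toLp 2 b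
      have := norm_sub_le y z
      simpa [PiLp.norm_eq_of_L2, y, z] using this
    -- bound ∑ ‖b n‖² ≤ ∑ ‖x n‖²
    have key : (∑ n : Fin N, ‖b n‖ ^ 2) ≤ ∑ n : Fin N, ‖x n‖ ^ 2 := by
      set g : ℕ → ℝ := fun i => if h : i < N then ‖x ⟨i, h⟩‖ ^ 2 else 0 with hg
      have hgnn : ∀ i, 0 ≤ g i := by
        intro i; simp only [hg]; split <;> positivity
      have step1 : (∑ n : Fin N, ‖b n‖ ^ 2) ≤
          ∑ i ∈ Finset.range N, (if 0 < i then g (i - 1) else 0) := by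
        rw [Finset.sum_range fun i => _]
        apply Finset.sum_le_sum
        intro n _
        by_cases h : 0 < (n : ℕ)
        · simp only [hb, h, dif_pos, if_pos]
          have h1 : (n : ℕ) - 1 < N := by have := n.isLt; omega
          simp only [hg, h1, dif_pos]
          have := contr_apply F hF (x ⟨(n : ℕ) - 1, h1⟩)
          nlinarith [norm_nonneg (F (x ⟨(n : ℕ) - 1, h1⟩)), norm_nonneg (x ⟨(n : ℕ) - 1, h1⟩)]
        · simp [hb, h]
      have step2 : (∑ i ∈ Finset.range N, (if 0 < i then g (i - 1) else 0)) ≤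
          ∑ i ∈ Finset.range N, g i := by
        obtain ⟨M, rfl⟩ : ∃ M, N = M + 1 := ⟨N - 1, by omega⟩
        rw [Finset.sum_range_succ']
        have h0 : (if 0 < 0 then g (0 - 1) else (0:ℝ)) = 0 := by simp
        have h1 : ∀ i, (if 0 < i + 1 then g (i + 1 - 1) else 0) = g i := by
          intro i; simp
        rw [h0, add_zero]
        simp only [h1]
        apply Finset.sum_le_sum_of_subset_of_nonneg (by intro i hi; simp at hi ⊢; omega)
        intro i _ _; exact hgnn i
      have step3 : (∑ i ∈ Finset.range N, g i) = ∑ n : Fin N, ‖x n‖ ^ 2 := by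
        rw [Finset.sum_range fun i => _]
        apply Finset.sum_congr rfl
        intro n _; simp [hg, n.isLt]
      linarith
    have hkey := Real.sqrt_le_sqrt key
    calc Real.sqrt (∑ n : Fin N, ‖x n - b n‖ ^ 2)
        ≤ Real.sqrt (∑ n : Fin N, ‖x n‖ ^ 2) + Real.sqrt (∑ n : Fin N, ‖b n‖ ^ 2) := tri
      _ ≤ Real.sqrt (∑ n : Fin N, ‖x n‖ ^ 2) + Real.sqrt (∑ n : Fin N, ‖x n‖ ^ 2) := by linarith
      _ = 2 * Real.sqrt (∑ n : Fin N, ‖x n‖ ^ 2) := by ring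
  · intro x
    set T : ℝ := ∑ j : Fin N, ‖x j‖ with hT
    have hTnn : 0 ≤ T := Finset.sum_nonneg fun _ _ => norm_nonneg _
    have hyn : ∀ n : Fin N,
        ‖∑ j : Fin N, if (j : ℕ) ≤ (n : ℕ) then (F ^ ((n : ℕ) - (j : ℕ))) (x j) else 0‖ ≤ T := by
      intro n
      calc ‖∑ j : Fin N, if (j : ℕ) ≤ (n : ℕ) then (F ^ ((n : ℕ) - (j : ℕ))) (x j) else 0‖
          ≤ ∑ j : Fin N, ‖if (j : ℕ) ≤ (n : ℕ) then (F ^ ((n : ℕ) - (j : ℕ))) (x j) else 0‖ :=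
            norm_sum_le _ _
        _ ≤ T := by
            apply Finset.sum_le_sum
            intro j _
            by_cases h : (j : ℕ) ≤ (n : ℕ)
            · simp only [if_pos h]
              exact pow_contr_apply F hF _ (x j)
            · simp [h]
    have sumsq : (∑ n : Fin N,
        ‖∑ j : Fin N, if (j : ℕ) ≤ (n : ℕ) then (F ^ ((n : ℕ) - (j : ℕ))) (x j) else 0‖ ^ 2)
        ≤ N * T ^ 2 := by
      calc (∑ n : Fin N, ‖∑ j : Fin N, if (j : ℕ) ≤ (n : ℕ) then
              (F ^ ((n : ℕ) - (j : ℕ))) (x j) else 0‖ ^ 2)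
          ≤ ∑ _n : Fin N, T ^ 2 := by
            apply Finset.sum_le_sum
            intro n _
            have := hyn n
            nlinarith [norm_nonneg (∑ j : Fin N, if (j : ℕ) ≤ (n : ℕ) then
              (F ^ ((n : ℕ) - (j : ℕ))) (x j) else 0)]
        _ = N * T ^ 2 := by simp [Finset.sum_const, nsmul_eq_mul]
    have cs : T ^ 2 ≤ N * ∑ j : Fin N, ‖x j‖ ^ 2 := by
      have := sq_sum_le_card_mul_sum_sq (s := (Finset.univ : Finset (Fin N)))
        (f := fun j => ‖x j‖)
      simpa using this
    have final : (∑ n : Fin N,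
        ‖∑ j : Fin N, if (j : ℕ) ≤ (n : ℕ) then (F ^ ((n : ℕ) - (j : ℕ))) (x j) else 0‖ ^ 2)
        ≤ (N : ℝ) ^ 2 * ∑ j : Fin N, ‖x j‖ ^ 2 := by
      have : (N : ℝ) * T ^ 2 ≤ (N : ℝ) * (N * ∑ j : Fin N, ‖x j‖ ^ 2) := by
        apply mul_le_mul_of_nonneg_left cs (by positivity)
      calc _ ≤ (N : ℝ) * T ^ 2 := sumsq
        _ ≤ (N : ℝ) * ((N : ℝ) * ∑ j : Fin N, ‖x j‖ ^ 2) := this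
        _ = (N : ℝ) ^ 2 * ∑ j : Fin N, ‖x j‖ ^ 2 := by ring
    have := Real.sqrt_le_sqrt final
    rwa [Real.sqrt_mul (by positivity), Real.sqrt_sq (by positivity)] at this
end
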